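/- Let Assumptions hold: H ∈ ℝ^{d×d} with ‖H‖_F² ≤ A², w ∈ ℝᵈ with ‖w‖² ≤ G², γ ∈ [0,1), and m₁,…,m_d independent with P(mⱼ = 1/(1-γ)) = 1-γ, P(mⱼ = 0) = γ. Define ĝ = g̃ + H(w∘m - w) for a fixed vector g̃ ∈ ℝᵈ. Then E[ĝ] = g̃ and E[‖ĝ - g̃‖²] ≤ A²G²·γ/(1-γ). -/

import Mathlib

open MeasureTheory ProbabilityTheory

theorem stmt13 {Ω : Type*} [MeasurableSpace Ω] (μ : Measure Ω)
    [IsProbabilityMeasure μ] (d : ℕ)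
    (H : Matrix (Fin d) (Fin d) ℝ) (A G : ℝ) (hA : 0 ≤ A) (hG : 0 ≤ G)
    (hH : ∑ i, ∑ j, (H i j)^2 ≤ A^2)
    (w : Fin d → ℝ) (hw : ∑ j, (w j)^2 ≤ G^2)
    (γ : ℝ) (hγ : γ ∈ Set.Ico (0:ℝ) 1)
    (m : Fin d → Ω → ℝ) (hm : ∀ j, Measurable (m j))
    (hindep : iIndepFun m μ)
    (hval : ∀ j, ∀ ω, m j ω = 1/(1-γ) ∨ m j ω = 0)
    (h1 : ∀ j, μ {ω | m j ω = 1/(1-γ)} = ENNReal.ofReal (1-γ))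
    (h0 : ∀ j, μ {ω | m j ω = 0} = ENNReal.ofReal γ)
    (gtilde : Fin d → ℝ)
    (ghat : Ω → Fin d → ℝ)
    (hghat : ∀ ω, ghat ω = fun i =>
      gtilde i + H.mulVec (fun j => w j * m j ω - w j) i) :
    (∀ i, ∫ ω, ghat ω i ∂μ = gtilde i) ∧
    ∫ ω, (∑ i, (ghat ω i - gtilde i)^2) ∂μ ≤ A^2 * G^2 * (γ/(1-γ)) := by
  have h1γ : (0:ℝ) < 1 - γ := by have := hγ.2; linarith
  have h1γ' : (1:ℝ) - γ ≠ 0 := ne_of_gt h1γ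
  set c : ℝ := 1/(1-γ) with hc
  set Y : Fin d → Ω → ℝ := fun j ω => m j ω - 1 with hY
  set S : Fin d → Set Ω := fun j => m j ⁻¹' {c} with hSdef
  have hS : ∀ j, MeasurableSet (S j) := fun j => hm j (measurableSet_singleton c)
  have hμS : ∀ j, μ (S j) = ENNReal.ofReal (1-γ) := by
    intro j
    have : S j = {ω | m j ω = c} := rfl
    rw [this]; exact h1 j
  have hSt : ∀ j, (μ (S j)).toReal = 1 - γ := by
    intro j; rw [hμS j, ENNReal.toReal_ofReal h1γ.le]
  have hmrep : ∀ j, m j = (S j).indicator (fun _ => c) := by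
    intro j; funext ω
    by_cases hω : ω ∈ S j
    · have : m j ω = c := hω
      simp [Set.indicator_of_mem hω, this]
    · have : m j ω = 0 := by
        rcases hval j ω with h | h
        · exact absurd h hω
        · exact h
      simp [Set.indicator_of_notMem hω, this]
  have intm : ∀ j, Integrable (m j) μ := by
    intro j; rw [hmrep j]; exact (integrable_const c).indicator (hS j)
  have Im : ∀ j, ∫ ω, m j ω ∂μ = 1 := by
    intro j
    rw [show (fun ω => m j ω) = (S j).indicator (fun _ => c) from hmrep j]
    rw [integral_indicator_const c (hS j), measureReal_def, hSt j, hc, smul_eq_mul]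
    field_simp
  have hYmeas : ∀ j, Measurable (Y j) := fun j => (hm j).sub measurable_const
  have intY : ∀ j, Integrable (Y j) μ := fun j => (intm j).sub (integrable_const 1)
  have IY : ∀ j, ∫ ω, Y j ω ∂μ = 0 := by
    intro j
    have : ∫ ω, Y j ω ∂μ = (∫ ω, m j ω ∂μ) - ∫ _ω, (1:ℝ) ∂μ :=
      integral_sub (intm j) (integrable_const 1)
    rw [this, Im j]; simp
  -- product integrability
  have hbY : ∀ j ω, |Y j ω| ≤ |c - 1| + 1 := by
    intro j ω
    have hyy : Y j ω = m j ω - 1 := rfl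
    rcases hval j ω with h | h
    · rw [hyy, h]; linarith [abs_nonneg (c - 1)]
    · rw [hyy, h, zero_sub, abs_neg, abs_one]; linarith [abs_nonneg (c - 1)]
  have intYY : ∀ j k, Integrable (fun ω => Y j ω * Y k ω) μ := by
    intro j k
    refine Integrable.mono' (integrable_const ((|c-1|+1) * (|c-1|+1)))
      ((hYmeas j).mul (hYmeas k)).aestronglyMeasurable (ae_of_all _ fun ω => ?_)
    rw [Real.norm_eq_abs, abs_mul]
    have h1 := hbY j ω; have h2 := hbY k ω
    have : (0:ℝ) ≤ |c - 1| + 1 := by positivity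
    exact mul_le_mul h1 h2 (abs_nonneg _) this
  -- second moment
  have IY2 : ∀ j, ∫ ω, Y j ω * Y j ω ∂μ = γ/(1-γ) := by
    intro j
    have hrep : (fun ω => Y j ω * Y j ω)
        = fun ω => (S j).indicator (fun _ => (c-1)^2 - 1) ω + 1 := by
      funext ω
      by_cases hω : ω ∈ S j
      · have hm' : m j ω = c := hω
        simp only [hY, hm', Set.indicator_of_mem hω]; ring
      · have hm' : m j ω = 0 := by
          rcases hval j ω with h | h
          · exact absurd h hω
          · exact h
        simp only [hY, hm', Set.indicator_of_notMem hω]; ring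
    rw [hrep]
    rw [integral_add (((integrable_const _).indicator (hS j))) (integrable_const 1)]
    rw [integral_indicator_const _ (hS j), measureReal_def, hSt j, integral_const]
    simp only [probReal_univ, measure_univ, ENNReal.toReal_one, smul_eq_mul, one_mul]
    rw [hc]
    field_simp
    ring
  -- cross terms vanish
  have IYY0 : ∀ j k, j ≠ k → ∫ ω, Y j ω * Y k ω ∂μ = 0 := by
    intro j k hjk
    have hind : IndepFun (m j) (m k) μ := hindep.indepFun hjk
    have hind' : IndepFun (Y j) (Y k) μ :=
      hind.comp (measurable_id.sub_const 1) (measurable_id.sub_const 1)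
    have h : ∫ ω, Y j ω * Y k ω ∂μ = (∫ ω, Y j ω ∂μ) * ∫ ω, Y k ω ∂μ :=
      hind'.integral_mul_eq_mul_integral (intY j).aestronglyMeasurable (intY k).aestronglyMeasurable
    rw [h, IY j, IY k]; ring
  have IYY : ∀ j k, ∫ ω, Y j ω * Y k ω ∂μ = if j = k then γ/(1-γ) else 0 := by
    intro j k
    by_cases h : j = k
    · subst h; simp [IY2 j]
    · simp [h, IYY0 j k h]
  -- coefficients
  set a : Fin d → Fin d → ℝ := fun i j => H i j * w j with ha
  have hpt : ∀ ω i, ghat ω i = gtilde i + ∑ j, a i j * Y j ω := by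
    intro ω i
    rw [hghat ω]
    simp only [Matrix.mulVec, dotProduct]
    congr 1
    exact Finset.sum_congr rfl fun j _ => by simp only [ha, hY]; ring
  constructor
  · intro i
    have : (fun ω => ghat ω i) = fun ω => gtilde i + ∑ j, a i j * Y j ω := by
      funext ω; exact hpt ω i
    rw [this, integral_add (integrable_const _)
      (integrable_finset_sum _ fun j _ => (intY j).const_mul _),
      integral_const, integral_finset_sum _ fun j _ => (intY j).const_mul _]
    simp only [probReal_univ, measure_univ, ENNReal.toReal_one, one_smul]
    have : ∀ j, ∫ ω, a i j * Y j ω ∂μ = 0 := by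
      intro j; rw [integral_const_mul, IY j]; ring
    simp [this]
  · -- variance bound
    have hsq : ∀ i, (fun ω => (ghat ω i - gtilde i)^2)
        = fun ω => ∑ j, ∑ k, (a i j * a i k) * (Y j ω * Y k ω) := by
      intro i; funext ω
      rw [hpt ω i]
      have : gtilde i + (∑ j, a i j * Y j ω) - gtilde i = ∑ j, a i j * Y j ω := by ring
      rw [this, sq, Finset.sum_mul_sum]
      exact Finset.sum_congr rfl fun j _ => Finset.sum_congr rfl fun k _ => by ring
    have hint : ∀ i, Integrable (fun ω => (ghat ω i - gtilde i)^2) μ := by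
      intro i; rw [hsq i]
      exact integrable_finset_sum _ fun j _ =>
        integrable_finset_sum _ fun k _ => (intYY j k).const_mul _
    have hIi : ∀ i, ∫ ω, (ghat ω i - gtilde i)^2 ∂μ = ∑ j, (a i j)^2 * (γ/(1-γ)) := by
      intro i
      rw [hsq i, integral_finset_sum _ fun j _ =>
        integrable_finset_sum _ fun k _ => (intYY j k).const_mul _]
      have : ∀ j, ∫ ω, ∑ k, (a i j * a i k) * (Y j ω * Y k ω) ∂μ
          = ∑ k, (a i j * a i k) * (if j = k then γ/(1-γ) else 0) := by
        intro j
        rw [integral_finset_sum _ fun k _ => (intYY j k).const_mul _]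
        exact Finset.sum_congr rfl fun k _ => by rw [integral_const_mul, IYY j k]
      simp only [this]
      refine Finset.sum_congr rfl fun j _ => ?_
      rw [Finset.sum_eq_single j]
      · simp [sq]
      · intro k _ hk; simp [Ne.symm hk]
      · intro h; exact absurd (Finset.mem_univ j) h
    rw [integral_finset_sum _ fun i _ => hint i]
    simp only [hIi]
    have hq : 0 ≤ γ/(1-γ) := div_nonneg hγ.1 h1γ.le
    have hwj : ∀ j, (w j)^2 ≤ G^2 := by
      intro j
      calc (w j)^2 ≤ ∑ k, (w k)^2 :=
            Finset.single_le_sum (fun k _ => sq_nonneg (w k)) (Finset.mem_univ j)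
        _ ≤ G^2 := hw
    calc ∑ i, ∑ j, (a i j)^2 * (γ/(1-γ))
        = (∑ i, ∑ j, (a i j)^2) * (γ/(1-γ)) := by
          rw [Finset.sum_mul]
          exact Finset.sum_congr rfl fun i _ => by rw [Finset.sum_mul]
      _ ≤ (A^2 * G^2) * (γ/(1-γ)) := by
          refine mul_le_mul_of_nonneg_right ?_ hq
          calc ∑ i, ∑ j, (a i j)^2 ≤ ∑ i, ∑ j, (H i j)^2 * G^2 := by
                refine Finset.sum_le_sum fun i _ => Finset.sum_le_sum fun j _ => ?_
                rw [ha, mul_pow]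
                exact mul_le_mul_of_nonneg_left (hwj j) (sq_nonneg _)
            _ = (∑ i, ∑ j, (H i j)^2) * G^2 := by
                rw [Finset.sum_mul]
                exact Finset.sum_congr rfl fun i _ => by rw [Finset.sum_mul]
            _ ≤ A^2 * G^2 := mul_le_mul_of_nonneg_right hH (sq_nonneg G)
      _ = A^2 * G^2 * (γ/(1-γ)) := rfl
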